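/- arXiv:math/0107054 — 2 statements merged into one kernel-verified Lean document; each statement's English description precedes it below -/
import Mathlib

section
/- For any simple vector v, write A v = f·[P_1, ..., P_l] and B v = f'·[P'_1, ..., P'_l]. Then P_1 = P_2, P_j = P'_j for all 2 ≤ j ≤ l, and f/f' = −P'_2/P'_1. -/
open Finset Filter MvPowerSeries

noncomputable section

/-- Formal power series in two variables `q` (index 0) and `z` (index 1). -/
abbrev PS : Type := MvPowerSeries (Fin 2) ℂ

/-- The variable `q`. -/
def Qv : PS := MvPowerSeries.X 0
/-- The variable `z`. -/
def Zv : PS := MvPowerSeries.X 1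

/-- Build a power series from its coefficient function. -/
def ofCoeff (c : (Fin 2 →₀ ℕ) → ℂ) : PS := c

/-- The exponent `q^a z^c`. -/
def idx2 (a c : ℕ) : Fin 2 →₀ ℕ := Finsupp.single 0 a + Finsupp.single 1 c

/-- The q-shift operator `(S g)(q,z) = g(q,qz)`. -/
def Sop (f : PS) : PS :=
  ofCoeff fun e => if e 1 ≤ e 0 then MvPowerSeries.coeff (idx2 (e 0 - e 1) (e 1)) f else 0

/-- The window condition for `(k,l)`-configurations: `x_j + ... + x_{j+l-1} ≤ k`. -/
def windowOK (k l : ℕ) (x : ℕ → ℕ) : Prop := ∀ j, ∑ t ∈ Finset.range l, x (j + t) ≤ k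

/-- The boundary condition: `x_0 + ... + x_i ≤ b_i` for `0 ≤ i ≤ l-2`. -/
def boundOK (l : ℕ) (b : ℕ → ℕ) (x : ℕ → ℕ) : Prop :=
  ∀ i, i < l - 1 → ∑ t ∈ Finset.range (i + 1), x t ≤ b i

/-- Admissible boundary vectors: `b_0 ≤ b_1 ≤ ... ≤ b_{l-2} ≤ k`. -/
def AdmB (k l : ℕ) (b : ℕ → ℕ) : Prop :=
  (∀ i j, i ≤ j → j < l - 1 → b i ≤ b j) ∧ ∀ i, i < l - 1 → b i ≤ k

/-- The character `χ^{(N)}_{k,l;b}(q,z)`: the coefficient of `q^a z^m` counts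
`(k,l)`-configurations of length at most `N` obeying the boundary conditions,
with `Σ j·x_j = a` and `Σ x_j = m`. -/
def chiN (k l N : ℕ) (b : ℕ → ℕ) : PS :=
  ofCoeff fun e => (Nat.card {x : ℕ → ℕ //
    windowOK k l x ∧ boundOK l b x ∧ (∀ i, N ≤ i → x i = 0) ∧
    ∑ j ∈ Finset.range N, j * x j = e 0 ∧ ∑ j ∈ Finset.range N, x j = e 1} : ℂ)

/-- The limit character `χ^{(∞)}_{k,l;b}(q,z)`. -/
def chiInf (k l : ℕ) (b : ℕ → ℕ) : PS :=
  ofCoeff fun e => (Nat.card {x : ℕ → ℕ //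
    windowOK k l x ∧ boundOK l b x ∧ (∀ i, e 0 + 1 ≤ i → x i = 0) ∧
    ∑ j ∈ Finset.range (e 0 + 1), j * x j = e 0 ∧
    ∑ j ∈ Finset.range (e 0 + 1), x j = e 1} : ℂ)

/-- The shifted boundary vector `(b_1 - i, ..., b_{l-2} - i, k - i)`. -/
def shiftB (k l : ℕ) (b : ℕ → ℕ) (i : ℕ) : ℕ → ℕ :=
  fun j => if j + 1 ≤ l - 2 then b (j + 1) - i else k - i

/-- The monomial `q^{p.1} z^{p.2}`. -/
def monoPS (p : ℕ × ℕ) : PS := Qv ^ p.1 * Zv ^ p.2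

/-- Exponents in the bracket `[P_1,...,P_l] = P_1^{b_0} P_2^{b_1-b_0} ⋯ P_l^{k-b_{l-2}}`. -/
def bexp (l k : ℕ) (b : ℕ → ℕ) (i : ℕ) : ℕ :=
  if i = 0 then b 0 else if i = l - 1 then k - b (l - 2) else b i - b (i - 1)

/-- The bracket `[P_1,...,P_l]` as a function of the boundary vector `b`. -/
def bracket (l k : ℕ) (P : ℕ → ℕ × ℕ) (b : ℕ → ℕ) : PS :=
  ∏ i ∈ Finset.range l, monoPS (P i) ^ bexp l k b i

/-- q-exponent pattern of the tuples in the list defining `V_l`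
(`r` of the entries carry a factor `z`; `c 0 = 0`). -/
def patQ (l r : ℕ) (c : ℕ → ℕ) (j : ℕ) : ℕ := if j < r then c (l - r + j) else c (j - r)

/-- z-exponent pattern of the tuples in the list defining `V_l`. -/
def patZ (r j : ℕ) : ℕ := if j < r then 1 else 0

/-- The tuples `(P_1,...,P_l)` appearing in the definition of `V_l`, namely
`q^{mk} z^{nk}[q^{c_{l-r}}z, …, q^{c_{l-1}}z, 1, q^{c_1}, …, q^{c_{l-1-r}}]`
with the common factor `q^m z^n` distributed over the entries. -/
def SimpleTuple (l : ℕ) (P : ℕ → ℕ × ℕ) : Prop :=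
  ∃ m n r : ℕ, r < l ∧ ∃ c : ℕ → ℕ, c 0 = 0 ∧ Monotone c ∧
    ∀ j, j < l → P j = (m + patQ l r c j, n + patZ r j)

/-- Admissible boundary data. -/
def Adm (k l : ℕ) : Type := {b : ℕ → ℕ // AdmB k l b}

/-- The ambient space of functions of `b` with values in power series; `V_l` is a
subspace of it. -/
abbrev VV (k l : ℕ) : Type := Adm k l → PS

/-- The simple vector `f(q,z)·[P_1,...,P_l]`. -/
def simpleVal (k l : ℕ) (f : PS) (P : ℕ → ℕ × ℕ) : VV k l := fun b => f * bracket l k P b.val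

/-- The space `V_l`, spanned by simple vectors. -/
def Vspan (k l : ℕ) : Submodule ℂ (VV k l) :=
  Submodule.span ℂ {v | ∃ f P, SimpleTuple l P ∧ v = simpleVal k l f P}

/-- Power series expansion of `1/(1 - q^{w.1} z^{w.2})` where `w` may have negative
exponents, in which case `1/(1-u) = -Σ_{n≥1} u^{-n}` is used. -/
def geomPS : ℤ × ℤ → PS := fun w =>
  if 0 ≤ w.1 ∧ 0 ≤ w.2 then
    ofCoeff fun e => ({n : ℕ | (n : ℤ) * w.1 = (e 0 : ℤ) ∧ (n : ℤ) * w.2 = (e 1 : ℤ)}.ncard : ℂ)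
  else
    ofCoeff fun e =>
      -({n : ℕ | 0 < n ∧ (n : ℤ) * w.1 = -(e 0 : ℤ) ∧ (n : ℤ) * w.2 = -(e 1 : ℤ)}.ncard : ℂ)

/-- Exponents of `S(q^{-1} z P_l / P_1)`. -/
def wExpA (l : ℕ) (P : ℕ → ℕ × ℕ) : ℤ × ℤ :=
  (((P (l-1)).1 : ℤ) + ((P (l-1)).2 : ℤ) - ((P 0).1 : ℤ) - ((P 0).2 : ℤ),
   ((P (l-1)).2 : ℤ) + 1 - ((P 0).2 : ℤ))

/-- The q-shift of a monomial: `S(q^e z^d) = q^{e+d} z^d`. -/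
def Smono (p : ℕ × ℕ) : ℕ × ℕ := (p.1 + p.2, p.2)

/-- The tuple `(S P_1, S P_1, S P_2, ..., S P_{l-1})` produced by the operator `A`. -/
def tupA (P : ℕ → ℕ × ℕ) : ℕ → ℕ × ℕ := fun j => if j = 0 then Smono (P 0) else Smono (P (j - 1))

/-- The tuple `(S(q^{-1} z P_l), S P_1, ..., S P_{l-1})` produced by the operator `B`. -/
def tupB (l : ℕ) (P : ℕ → ℕ × ℕ) : ℕ → ℕ × ℕ :=
  fun j => if j = 0 then ((P (l-1)).1 + (P (l-1)).2, (P (l-1)).2 + 1) else Smono (P (j - 1))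

/-- Defining property of the operator `A`:
`A(f[P_1,…,P_l]) = S(f/(1 - q^{-1}zP_l/P_1)·[P_1,P_1,P_2,…,P_{l-1}])`. -/
def HypA (k l : ℕ) (A : Module.End ℂ (VV k l)) : Prop :=
  ∀ f P, SimpleTuple l P →
    A (simpleVal k l f P) = simpleVal k l (Sop f * geomPS (wExpA l P)) (tupA P)

/-- Defining property of the operator `B`:
`B(f[P_1,…,P_l]) = S(f/(1 - q z^{-1}P_1/P_l)·[q^{-1}zP_l,P_1,…,P_{l-1}])`. -/
def HypB (k l : ℕ) (B : Module.End ℂ (VV k l)) : Prop :=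
  ∀ f P, SimpleTuple l P →
    B (simpleVal k l f P) =
      simpleVal k l (Sop f * geomPS (-(wExpA l P).1, -(wExpA l P).2)) (tupB l P)

/-- The vector `v_ini = [1,...,1]`. -/
def vini (k l : ℕ) : VV k l := simpleVal k l 1 (fun _ => (0, 0))

/-- `(z)_n = Π_{i=0}^{n-1} (1 - q^i z)`. -/
def pochZ (n : ℕ) : PS := ∏ i ∈ Finset.range n, (1 - Qv ^ i * Zv)
/-- `(q)_t = Π_{i=1}^{t} (1 - q^i)`. -/
def pochQ (t : ℕ) : PS := ∏ i ∈ Finset.range t, (1 - Qv ^ (i + 1))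
/-- `(q^t z)_∞ = Π_{i≥0} (1 - q^{t+i} z)`, defined coefficientwise. -/
def pochInfQZ (t : ℕ) : PS :=
  ofCoeff fun e =>
    MvPowerSeries.coeff e (∏ i ∈ Finset.range (e 0 + 1), (1 - Qv ^ (t + i) * Zv))
/-- `(z)_∞ = Π_{i≥0} (1 - q^i z)`. -/
def pochInfZ : PS := pochInfQZ 0

/-- The vector `v_∞ = [1,...,1]/(z)_∞`. -/
def vinf (k l : ℕ) : VV k l := simpleVal k l pochInfZ⁻¹ (fun _ => (0, 0))

/-- Application of a monomial (word) in the operators `A` (letter `true`) and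
`B` (letter `false`) to a vector; the leftmost letter acts last read, i.e.
`C_1 C_2 ⋯ C_m v = C_1 (C_2 (⋯ (C_m v)))`. -/
def wact (k l : ℕ) (A B : Module.End ℂ (VV k l)) (w : List Bool) (v : VV k l) : VV k l :=
  w.foldr (fun c u => if c then A u else B u) v

/-- A good monomial: `C_i = A` implies `C_{i+l-1} = A` (letters 0-indexed, `true = A`). -/
def GoodWord (l : ℕ) (w : List Bool) : Prop :=
  ∀ i, i + (l - 1) < w.length → w.getD i true = true → w.getD (i + (l - 1)) true = true

/-- Canonical representative of an equivalence class of monomials: no trailing `A`s. -/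
def Reduced (w : List Bool) : Prop := w = [] ∨ w.getLast? = some false

/-- Symbols for marked vertices: `•`, `∘`, `×`. -/
inductive MSym : Type
  | dot | circ | mark
  deriving DecidableEq

/-- The `A`-arrow on (possibly marked) vertices. -/
def stepA : List MSym → List MSym
  | MSym.circ :: J => J ++ [MSym.circ]
  | MSym.dot :: _ :: J => MSym.dot :: (J ++ [MSym.circ])
  | MSym.mark :: MSym.dot :: J => MSym.dot :: (J ++ [MSym.circ])
  | MSym.mark :: MSym.circ :: J => MSym.mark :: (J ++ [MSym.circ])
  | MSym.mark :: MSym.mark :: J => MSym.dot :: (J ++ [MSym.circ])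
  | v => v

/-- The `B`-arrow on (possibly marked) vertices: rotation. -/
def stepB : List MSym → List MSym
  | [] => []
  | x :: J => J ++ [x]

/-- The marked path of the monomial `w` (extended by `A`s at positions beyond its
length), starting from `[•,…,•,×]`; `mstate l w t` is the vertex after `t` arrows. -/
def mstate (l : ℕ) (w : List Bool) : ℕ → List MSym
  | 0 => List.replicate (l - 1) MSym.dot ++ [MSym.mark]
  | t + 1 => (if w.getD t true then stepA else stepB) (mstate l w t)

/-- The `t`-th vertex of the marked path has the form `[× • J]`, i.e. the `t`-th
arrow is of type (i) or (ii). -/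
def CSrc (l : ℕ) (w : List Bool) (t : ℕ) : Prop :=
  (mstate l w t).getD 0 MSym.circ = MSym.mark ∧ (mstate l w t).getD 1 MSym.circ = MSym.dot

/-- `(N A K, N B K)` is a cancellation pair: `N A K` is good and the displayed `A`
is its cancellation `A`-arrow (the last arrow of type (i) or (ii)). -/
def CancelPair (l : ℕ) (N K : List Bool) : Prop :=
  GoodWord l (N ++ true :: K) ∧ CSrc l (N ++ true :: K) N.length ∧
    ∀ t, N.length < t → ¬ CSrc l (N ++ true :: K) t

/-- `w` is good and has a cancellation `A`-arrow. -/
def HasCA (l : ℕ) (w : List Bool) : Prop :=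
  GoodWord l w ∧ ∃ t, w.getD t true = true ∧ CSrc l w t ∧ ∀ t', t < t' → ¬ CSrc l w t'

/-- `w` is good and has a cancellation `B`-arrow. -/
def HasCB (l : ℕ) (w : List Bool) : Prop :=
  GoodWord l w ∧ ∃ t, w.getD t true = false ∧ CSrc l w t ∧ ∀ t', t < t' → ¬ CSrc l w t'

/-- The index of the cancellation arrow. -/
def cancelIdx (l : ℕ) (w : List Bool) : ℕ :=
  sInf {t | CSrc l w t ∧ ∀ t', t < t' → ¬ CSrc l w t'}

/-- Flip the letter at the cancellation arrow. -/
def flipCancel (l : ℕ) (w : List Bool) : List Bool :=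
  (w ++ List.replicate (cancelIdx l w + 1 - w.length) true).set (cancelIdx l w) false

/-- The lattice `Λ` is `ℕ → ℤ` supported on `{0,…,l-1}`; coordinates `0,…,l-2`
are the generators `b_0,…,b_{l-2}` and coordinate `l-1` is the generator `k`.
`Ma` is the map `M_a`: `b_i ↦ b_{i+1}` (`i ≤ l-3`), `b_{l-2} ↦ k`, `k ↦ k`. -/
def Ma (l : ℕ) (v : ℕ → ℤ) : ℕ → ℤ := fun j =>
  if j = 0 then 0
  else if j = l - 1 then v (l - 2) + v (l - 1)
  else if j < l - 1 then v (j - 1)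
  else 0

/-- The map `M_b`: `b_i ↦ b_{i+1} - b_0` (`i ≤ l-3`), `b_{l-2} ↦ k - b_0`, `k ↦ k`. -/
def Mb (l : ℕ) (v : ℕ → ℤ) : ℕ → ℤ := fun j =>
  if j = 0 then -(∑ i ∈ Finset.range (l - 1), v i)
  else if j = l - 1 then v (l - 2) + v (l - 1)
  else if j < l - 1 then v (j - 1)
  else 0

/-- The representative `ī ∈ {1,…,l}` of `i` modulo `l`. -/
def ibar (l : ℕ) (i : ℤ) : ℕ := ((i - 1) % (l : ℤ)).toNat + 1

/-- `ι_{i,j} = b_{ī-2} - b_{j̄-2} + k·δ(ī ≤ j̄)` (with `b_{-1} = 0`). -/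
def iotaL (l : ℕ) (i j : ℤ) : ℕ → ℤ := fun t =>
  (if 2 ≤ ibar l i ∧ t = ibar l i - 2 then 1 else 0)
  - (if 2 ≤ ibar l j ∧ t = ibar l j - 2 then 1 else 0)
  + (if ibar l i ≤ ibar l j ∧ t = l - 1 then 1 else 0)

/-- `M_{c_1} ∘ ⋯ ∘ M_{c_m}` applied to `v`, where `c_i = a` if the `i`-th letter is
`A` (`true`) and `c_i = b` otherwise. -/
def applyWord (l : ℕ) (w : List Bool) (v : ℕ → ℤ) : ℕ → ℤ :=
  w.foldr (fun c u => if c then Ma l u else Mb l u) v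

/-- The extremal configuration of the monomial `w`:
`x_i = 0` if `C_{i+1} = A` and `x_i = M_{c_1} ∘ ⋯ ∘ M_{c_i}(b_0)` if `C_{i+1} = B`
(entries beyond the length of `w` are `0`, matching equivalence of configurations). -/
def xconf (l : ℕ) (w : List Bool) (i : ℕ) : ℕ → ℤ :=
  if w.getD i true = true then 0 else applyWord l (w.take i) (iotaL l 2 1)

/-- The `A`-arrow of the summation graph (vertices as arrays of `•` = `true`,
`∘` = `false`). -/
def vstepA : List Bool → List Bool
  | false :: J => J ++ [false]
  | true :: _ :: J => true :: (J ++ [false])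
  | v => v

/-- The `B`-arrow of the summation graph: rotation. -/
def vstepB : List Bool → List Bool
  | [] => []
  | x :: J => J ++ [x]

/-- The path associated with `w` in the summation graph, starting from
`I_top = [•,…,•]`; `vstate l w t` is the vertex `I^{(t)}`. -/
def vstate (l : ℕ) (w : List Bool) (t : ℕ) : List Bool :=
  (w.take t).foldl (fun v c => if c then vstepA v else vstepB v) (List.replicate l true)

/-- The evolution of the vector part of a simple vector under one operator. -/
def tupStep (l : ℕ) (c : Bool) (P : ℕ → ℕ × ℕ) : ℕ → ℕ × ℕ :=
  if c then tupA P else tupB l P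

/-- The vector part of `M v_∞` for a word `M`. -/
def wordTuple (l : ℕ) : List Bool → ℕ → ℕ × ℕ
  | [] => fun _ => (0, 0)
  | c :: w => tupStep l c (wordTuple l w)

/-- The scalar part of `M v_∞` for a word `M`. -/
def wordScalar (l : ℕ) : List Bool → PS
  | [] => pochInfZ⁻¹
  | c :: w =>
      Sop (wordScalar l w) *
        (if c then geomPS (wExpA l (wordTuple l w))
         else geomPS (-(wExpA l (wordTuple l w)).1, -(wExpA l (wordTuple l w)).2))

/-- A cancellation block `𝔹_s = C_1 ⋯ C_{l+s}` with `C_1 = C_{s+2} = C_l = B`,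
`C_2 = ⋯ = C_{s+1} = A`, `C_{l+1} = ⋯ = C_{l+s} = A` (0-indexed positions). -/
def IsBlock (l s : ℕ) (w : List Bool) : Prop :=
  s ≤ l - 2 ∧ w.length = l + s ∧
  w.getD 0 true = false ∧ w.getD (s + 1) true = false ∧ w.getD (l - 1) true = false ∧
  (∀ i, 1 ≤ i → i ≤ s → w.getD i true = true) ∧
  (∀ i, l ≤ i → i < l + s → w.getD i true = true)

/-- The block `𝔼_i = C_2 ⋯ C_l` where `C_j = B` iff `j ∈ {σ(1),…,σ(i)}`
(1-based values of the permutation; `true = A`, `false = B`). -/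
def Eblock (l : ℕ) (σ : Equiv.Perm (Fin l)) (i : ℕ) : List Bool :=
  (List.range (l - 1)).map fun t => decide (∀ a : Fin l, (a : ℕ) < i → (σ a : ℕ) ≠ t + 1)

/-- The word `𝔼_{l-2}^{n_{l-2}} ⋯ 𝔼_1^{n_1}`. -/
def coreWord (l : ℕ) (σ : Equiv.Perm (Fin l)) (n : ℕ → ℤ) : List Bool :=
  (((List.range (l - 2)).reverse.map fun i' =>
    (List.replicate (n (i' + 1)).toNat (Eblock l σ (i' + 1))).flatten)).flatten

/-- The word `B^{n_{l-1}} 𝔼_{l-2}^{n_{l-2}} ⋯ 𝔼_1^{n_1}`; for `n_{l-1} < 0` the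
first `-n_{l-1}` letters (which are `B`s) are removed instead. -/
def theWord (l : ℕ) (σ : Equiv.Perm (Fin l)) (n : ℕ → ℤ) : List Bool :=
  if 0 ≤ n (l - 1) then List.replicate (n (l - 1)).toNat false ++ coreWord l σ n
  else (coreWord l σ n).drop (-(n (l - 1))).toNat

/-- `σ(1) = l` and `σ(l) = 1` (in 1-based notation). -/
def SigmaCond (l : ℕ) (σ : Equiv.Perm (Fin l)) : Prop :=
  (∀ a : Fin l, (a : ℕ) = 0 → (σ a : ℕ) = l - 1) ∧
  (∀ a : Fin l, (a : ℕ) = l - 1 → (σ a : ℕ) = 0)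

/-- The conditions on `n = (n_1,…,n_{l-1})`: `n_i ≥ 0` for `i ≤ l-2`,
`n_{l-1} ≥ 2 - σ(l-1)`, `n_i > 0` whenever `σ(i) < σ(i+1)`; the unused entries
are normalized to `0`. -/
def NCond (l : ℕ) (σ : Equiv.Perm (Fin l)) (n : ℕ → ℤ) : Prop :=
  (∀ i, 1 ≤ i → i ≤ l - 2 → 0 ≤ n i) ∧
  (∀ a : Fin l, (a : ℕ) = l - 2 → (2 : ℤ) - (((σ a : ℕ) : ℤ) + 1) ≤ n (l - 1)) ∧
  (∀ i, 1 ≤ i → i ≤ l - 1 → ∀ a b : Fin l, (a : ℕ) = i - 1 → (b : ℕ) = i →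
      (σ a : ℕ) < (σ b : ℕ) → 0 < n i) ∧
  (∀ i, i = 0 ∨ l - 1 < i → n i = 0)

end

noncomputable section AuxStmt16

lemma coeff_ofCoeff (c : (Fin 2 →₀ ℕ) → ℂ) (e : Fin 2 →₀ ℕ) :
    MvPowerSeries.coeff e (ofCoeff c) = c e := rfl

lemma monoPS_eq (A B : ℕ) : monoPS (A, B) = MvPowerSeries.monomial (idx2 A B) 1 := by
  simp [monoPS, Qv, Zv, idx2, MvPowerSeries.X_pow_eq, MvPowerSeries.monomial_mul_monomial]

lemma coeff_mul_monoPS (g : PS) (A B : ℕ) (e : Fin 2 →₀ ℕ) :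
    MvPowerSeries.coeff e (g * monoPS (A, B)) =
      if idx2 A B ≤ e then MvPowerSeries.coeff (e - idx2 A B) g else 0 := by
  rw [monoPS_eq, MvPowerSeries.coeff_mul_monomial]
  split_ifs <;> simp

@[simp] lemma idx2_app0 (A B : ℕ) : idx2 A B (0 : Fin 2) = A := by
  simp [idx2, Finsupp.single_apply]

@[simp] lemma idx2_app1 (A B : ℕ) : idx2 A B (1 : Fin 2) = B := by
  simp [idx2, Finsupp.single_apply]

lemma idx2_le (A B : ℕ) (e : Fin 2 →₀ ℕ) : idx2 A B ≤ e ↔ A ≤ e 0 ∧ B ≤ e 1 := by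
  rw [Finsupp.le_def, Fin.forall_fin_two]
  simp

@[simp] lemma sub_idx2_app0 (A B : ℕ) (e : Fin 2 →₀ ℕ) :
    (e - idx2 A B) (0 : Fin 2) = e 0 - A := by
  rw [Finsupp.tsub_apply]; simp

@[simp] lemma sub_idx2_app1 (A B : ℕ) (e : Fin 2 →₀ ℕ) :
    (e - idx2 A B) (1 : Fin 2) = e 1 - B := by
  rw [Finsupp.tsub_apply]; simp

lemma geom_mixed1 (a b : ℤ) (ha : 0 < a) (hb : b < 0) : geomPS (a, b) = 0 := by
  simp only [geomPS]
  rw [if_neg (by push_neg; intro _; omega)]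
  apply MvPowerSeries.ext
  intro e
  rw [coeff_ofCoeff, map_zero (MvPowerSeries.coeff e)]
  suffices h : {n : ℕ | 0 < n ∧ (n:ℤ) * a = -(e 0 : ℤ) ∧ (n:ℤ) * b = -(e 1 : ℤ)} = ∅ by
    rw [h]; simp
  ext n
  simp only [Set.mem_setOf_eq, Set.mem_empty_iff_false, iff_false, not_and]
  intro hn h1
  have hpos : 0 < (n:ℤ) * a := mul_pos (by exact_mod_cast hn) ha
  rw [h1] at hpos
  omega

lemma geom_mixed2 (a b : ℤ) (ha : a < 0) (hb : 0 < b) : geomPS (a, b) = 0 := by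
  simp only [geomPS]
  rw [if_neg (by push_neg; intro h; omega)]
  apply MvPowerSeries.ext
  intro e
  rw [coeff_ofCoeff, map_zero (MvPowerSeries.coeff e)]
  suffices h : {n : ℕ | 0 < n ∧ (n:ℤ) * a = -(e 0 : ℤ) ∧ (n:ℤ) * b = -(e 1 : ℤ)} = ∅ by
    rw [h]; simp
  ext n
  simp only [Set.mem_setOf_eq, Set.mem_empty_iff_false, iff_false, not_and]
  intro hn h1 h2
  have hpos : 0 < (n:ℤ) * b := mul_pos (by exact_mod_cast hn) hb
  rw [h2] at hpos
  omega

lemma geom_zero_zero : geomPS (0, 0) = 0 := by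
  simp only [geomPS]
  rw [if_pos ⟨le_refl 0, le_refl 0⟩]
  apply MvPowerSeries.ext
  intro e
  rw [coeff_ofCoeff, map_zero (MvPowerSeries.coeff e)]
  by_cases h : e 0 = 0 ∧ e 1 = 0
  · have hs : {n : ℕ | (n:ℤ) * 0 = (e 0 : ℤ) ∧ (n:ℤ) * 0 = (e 1 : ℤ)} = Set.univ := by
      ext n; simp [h.1, h.2]
    rw [hs, Set.ncard_univ, Nat.card_eq_zero_of_infinite]
    simp
  · have hs : {n : ℕ | (n:ℤ) * 0 = (e 0 : ℤ) ∧ (n:ℤ) * 0 = (e 1 : ℤ)} = ∅ := by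
      ext n
      simp only [Set.mem_setOf_eq, mul_zero, Set.mem_empty_iff_false, iff_false]
      omega
    rw [hs]
    simp

lemma coreLe (A0 B0 A1 B1 : ℕ) (h1 : A1 ≤ A0) (h2 : B1 ≤ B0) :
    geomPS ((A0:ℤ) - A1, (B0:ℤ) - B1) * monoPS (A0, B0) =
      -(geomPS ((A1:ℤ) - A0, (B1:ℤ) - B0) * monoPS (A1, B1)) := by
  by_cases heq : A0 = A1 ∧ B0 = B1
  · obtain ⟨rfl, rfl⟩ := heq
    rw [show ((A0:ℤ) - A0, (B0:ℤ) - B0) = ((0:ℤ), (0:ℤ)) by norm_num, geom_zero_zero]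
    simp
  · have hc1 : (0:ℤ) ≤ (A0:ℤ) - A1 ∧ (0:ℤ) ≤ (B0:ℤ) - B1 := by omega
    have hc2 : ¬((0:ℤ) ≤ (A1:ℤ) - A0 ∧ (0:ℤ) ≤ (B1:ℤ) - B0) := by omega
    simp only [geomPS]
    rw [if_pos hc1, if_neg hc2]
    apply MvPowerSeries.ext
    intro e
    rw [map_neg, coeff_mul_monoPS, coeff_mul_monoPS]
    simp only [coeff_ofCoeff, idx2_le, sub_idx2_app0, sub_idx2_app1]
    by_cases hcond : A0 ≤ e 0 ∧ B0 ≤ e 1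
    · rw [if_pos hcond, if_pos ⟨le_trans h1 hcond.1, le_trans h2 hcond.2⟩, neg_neg]
      have hS : {n : ℕ | 0 < n ∧ (n:ℤ) * ((A1:ℤ) - A0) = -((e 0 - A1 : ℕ) : ℤ) ∧
            (n:ℤ) * ((B1:ℤ) - B0) = -((e 1 - B1 : ℕ) : ℤ)} =
          (fun n => n + 1) '' {n : ℕ | (n:ℤ) * ((A0:ℤ) - A1) = ((e 0 - A0 : ℕ) : ℤ) ∧
            (n:ℤ) * ((B0:ℤ) - B1) = ((e 1 - B0 : ℕ) : ℤ)} := by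
        have c1 : ((e 0 - A0 : ℕ) : ℤ) = (e 0 : ℤ) - A0 := by omega
        have c2 : ((e 1 - B0 : ℕ) : ℤ) = (e 1 : ℤ) - B0 := by omega
        have c3 : ((e 0 - A1 : ℕ) : ℤ) = (e 0 : ℤ) - A1 := by omega
        have c4 : ((e 1 - B1 : ℕ) : ℤ) = (e 1 : ℤ) - B1 := by omega
        simp only [c1, c2, c3, c4]
        ext m
        simp only [Set.mem_image, Set.mem_setOf_eq]
        constructor
        · rintro ⟨hm, ha', hb'⟩
          refine ⟨m - 1, ⟨?_, ?_⟩, by omega⟩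
          · have cm : ((m - 1 : ℕ) : ℤ) = (m : ℤ) - 1 := by omega
            rw [cm]; linear_combination -ha'
          · have cm : ((m - 1 : ℕ) : ℤ) = (m : ℤ) - 1 := by omega
            rw [cm]; linear_combination -hb'
        · rintro ⟨n, ⟨ha', hb'⟩, rfl⟩
          refine ⟨by omega, ?_, ?_⟩ <;> push_cast
          · linear_combination -ha'
          · linear_combination -hb'
      rw [hS, Set.ncard_image_of_injective _ (fun x y h => by omega)]
    · rw [if_neg hcond]
      by_cases hcond2 : A1 ≤ e 0 ∧ B1 ≤ e 1
      · rw [if_pos hcond2]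
        have hS : {n : ℕ | 0 < n ∧ (n:ℤ) * ((A1:ℤ) - A0) = -((e 0 - A1 : ℕ) : ℤ) ∧
            (n:ℤ) * ((B1:ℤ) - B0) = -((e 1 - B1 : ℕ) : ℤ)} = ∅ := by
          ext m
          simp only [Set.mem_setOf_eq, Set.mem_empty_iff_false, iff_false, not_and]
          intro hm ha' hb'
          have e1 : (1:ℤ) * ((A0:ℤ) - A1) ≤ (m:ℤ) * ((A0:ℤ) - A1) :=
            mul_le_mul_of_nonneg_right (by exact_mod_cast hm) (by omega)
          have e2 : (1:ℤ) * ((B0:ℤ) - B1) ≤ (m:ℤ) * ((B0:ℤ) - B1) :=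
            mul_le_mul_of_nonneg_right (by exact_mod_cast hm) (by omega)
          have e3 : (m:ℤ) * ((A0:ℤ) - A1) = ((e 0 - A1 : ℕ) : ℤ) := by linear_combination -ha'
          have e4 : (m:ℤ) * ((B0:ℤ) - B1) = ((e 1 - B1 : ℕ) : ℤ) := by linear_combination -hb'
          rw [e3] at e1
          rw [e4] at e2
          omega
        rw [hS]
        simp
      · rw [if_neg hcond2]
        simp

lemma coreEq (A0 B0 A1 B1 : ℕ) :
    geomPS ((A0:ℤ) - A1, (B0:ℤ) - B1) * monoPS (A0, B0) =
      -(geomPS ((A1:ℤ) - A0, (B1:ℤ) - B0) * monoPS (A1, B1)) := by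
  by_cases h : A1 ≤ A0 ∧ B1 ≤ B0
  · exact coreLe A0 B0 A1 B1 h.1 h.2
  by_cases h' : A0 ≤ A1 ∧ B0 ≤ B1
  · rw [coreLe A1 B1 A0 B0 h'.1 h'.2, neg_neg]
  rcases (show (A1 < A0 ∧ B0 < B1) ∨ (A0 < A1 ∧ B1 < B0) by omega) with hm | hm
  · rw [geom_mixed1 _ _ (by omega) (by omega), geom_mixed2 _ _ (by omega) (by omega)]
    simp
  · rw [geom_mixed2 _ _ (by omega) (by omega), geom_mixed1 _ _ (by omega) (by omega)]
    simp

end AuxStmt16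


/-- For any simple vector `v`, writing `Av = f·[P_1,…,P_l]` and `Bv = f'·[P'_1,…,P'_l]`
(as given by the definitions of `A` and `B`), one has `P_1 = P_2`, `P_j = P'_j` for
`2 ≤ j ≤ l`, and `f/f' = -P'_2/P'_1` (stated multiplicatively: `f·P'_1 = -f'·P'_2`). -/
theorem stmt16 (k l : ℕ) (hk : 0 < k) (hl : 2 ≤ l)
    (f : PS) (P : ℕ → ℕ × ℕ) (hP : SimpleTuple l P) :
    tupA P 0 = tupA P 1 ∧
    (∀ j, 1 ≤ j → j ≤ l - 1 → tupA P j = tupB l P j) ∧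
    (Sop f * geomPS (wExpA l P)) * monoPS (tupB l P 0) =
      -((Sop f * geomPS (-(wExpA l P).1, -(wExpA l P).2)) * monoPS (tupB l P 1)) := by
  refine ⟨by norm_num [tupA], fun j hj _ => ?_, ?_⟩
  · have hj0 : j ≠ 0 := by omega
    simp [tupA, tupB, hj0]
  · have h0 : tupB l P 0 = ((P (l-1)).1 + (P (l-1)).2, (P (l-1)).2 + 1) := by simp [tupB]
    have h1 : tupB l P 1 = ((P 0).1 + (P 0).2, (P 0).2) := by norm_num [tupB, Smono]
    have hw : wExpA l P =
        ((((P (l-1)).1 + (P (l-1)).2 : ℕ) : ℤ) - (((P 0).1 + (P 0).2 : ℕ) : ℤ),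
         (((P (l-1)).2 + 1 : ℕ) : ℤ) - (((P 0).2 : ℕ) : ℤ)) := by
      simp only [wExpA, Prod.mk.injEq]
      constructor <;> push_cast <;> ring
    have hw' : (-(wExpA l P).1, -(wExpA l P).2) =
        ((((P 0).1 + (P 0).2 : ℕ) : ℤ) - (((P (l-1)).1 + (P (l-1)).2 : ℕ) : ℤ),
         (((P 0).2 : ℕ) : ℤ) - (((P (l-1)).2 + 1 : ℕ) : ℤ)) := by
      rw [hw]
      simp only [Prod.mk.injEq]
      constructor <;> ring
    rw [h0, h1, hw', hw, mul_assoc, mul_assoc, coreEq]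
    ring
end

section
/- Let (M, M') = (NAK, NBK) be a cancellation pair. Then BN can be decomposed uniquely as a product of cancellation blocks: BN = 𝔹_{s_1} 𝔹_{s_2} ··· 𝔹_{s_p} for some p ≥ 1 and integers 0 ≤ s_1, ..., s_p ≤ l−2. -/
open Finset Filter MvPowerSeries

section Blocks

/-- Run the word letters via `getD`, as in `mstate`. -/
def runD (w : List Bool) : ℕ → List MSym → List MSym
  | 0, v => v
  | t+1, v => (if w.getD t true then stepA else stepB) (runD w t v)

/-- The symbol appended by a letter. -/
def mg (c : Bool) : MSym := if c then MSym.circ else MSym.dot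

lemma stepA_circ (J : List MSym) : stepA (MSym.circ :: J) = J ++ [MSym.circ] := rfl
lemma stepA_dot (y : MSym) (J : List MSym) :
    stepA (MSym.dot :: y :: J) = MSym.dot :: (J ++ [MSym.circ]) := rfl
lemma stepA_mark_dot (J : List MSym) :
    stepA (MSym.mark :: MSym.dot :: J) = MSym.dot :: (J ++ [MSym.circ]) := rfl
lemma stepA_mark_circ (J : List MSym) :
    stepA (MSym.mark :: MSym.circ :: J) = MSym.mark :: (J ++ [MSym.circ]) := rfl
lemma stepB_cons (x : MSym) (J : List MSym) : stepB (x :: J) = J ++ [x] := rfl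

lemma getD_drop' {α} (l : List α) (j i : ℕ) (d : α) : (l.drop j).getD i d = l.getD (j+i) d := by
  simp [List.getD_eq_getElem?_getD, List.getElem?_drop]

lemma getD_append_left' {α} (a b : List α) (i : ℕ) (d : α) (h : i < a.length) :
    (a ++ b).getD i d = a.getD i d := by
  simp [List.getD_eq_getElem?_getD, List.getElem?_append, h]

lemma getD_take' {α} (a : List α) (m i : ℕ) (d : α) (h : i < m) :
    (a.take m).getD i d = a.getD i d := by
  simp [List.getD_eq_getElem?_getD, List.getElem?_take, h]

lemma getD_map_range {α} (f : ℕ → α) (k j : ℕ) (d : α) (h : j < k) :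
    (((List.range k).map f).getD j d) = f j := by
  simp [List.getD_eq_getElem?_getD, List.getElem?_map, List.getElem?_range h]

lemma getD_all {α} {d : α} : ∀ (A : List α), (∀ x ∈ A, x = d) → ∀ j, A.getD j d = d := by
  intro A
  induction A with
  | nil => intro _ j; cases j <;> rfl
  | cons a t ih =>
    intro h j
    cases j with
    | zero => exact h a (by simp)
    | succ j => exact ih (fun x hx => h x (by simp [hx])) j

lemma map_range_succ_peel {α} (f : ℕ → α) (k : ℕ) :
    (List.range (k+1)).map f = f 0 :: (List.range k).map (fun i => f (i+1)) := by
  rw [List.range_succ_eq_map]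
  simp [List.map_map, Function.comp]

lemma map_range_congr {α} (f g : ℕ → α) (k : ℕ) (h : ∀ i, i < k → f i = g i) :
    (List.range k).map f = (List.range k).map g := by
  apply List.map_congr_left
  intro a ha
  exact h a (List.mem_range.mp ha)

lemma mark_not_mem_stepA {v : List MSym} (h : MSym.mark ∉ v) : MSym.mark ∉ stepA v := by
  match v with
  | [] => exact h
  | MSym.circ :: J => rw [stepA_circ]; simp_all
  | MSym.dot :: [] => exact h
  | MSym.dot :: y :: J => rw [stepA_dot]; simp_all
  | MSym.mark :: J => simp at h

lemma mark_not_mem_stepB {v : List MSym} (h : MSym.mark ∉ v) : MSym.mark ∉ stepB v := by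
  match v with
  | [] => exact h
  | x :: J => rw [stepB_cons]; simp_all

lemma mark_not_mem_runD (w : List Bool) (t : ℕ) {v : List MSym} (h : MSym.mark ∉ v) :
    MSym.mark ∉ runD w t v := by
  induction t with
  | zero => exact h
  | succ t ih =>
    show MSym.mark ∉ (if w.getD t true then stepA else stepB) (runD w t v)
    split
    · exact mark_not_mem_stepA ih
    · exact mark_not_mem_stepB ih

lemma mark_mem_of_getD0 {v : List MSym} (h : v.getD 0 MSym.circ = MSym.mark) : MSym.mark ∈ v := by
  cases v with
  | nil => simp [List.getD] at h
  | cons a t => simp [List.getD] at h; simp [h]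

lemma runD_add (w : List Bool) (a b : ℕ) (v : List MSym) :
    runD w (a + b) v = runD (w.drop a) b (runD w a v) := by
  induction b with
  | zero => rfl
  | succ b ih =>
    show (if w.getD (a+b) true then stepA else stepB) (runD w (a+b) v) =
      (if (w.drop a).getD b true then stepA else stepB) _
    rw [ih, getD_drop']

lemma runD_congr {w1 w2 : List Bool} (t : ℕ) (hw : ∀ i, i < t → w1.getD i true = w2.getD i true)
    (v : List MSym) : runD w1 t v = runD w2 t v := by
  induction t with
  | zero => rfl
  | succ t ih =>
    show (if w1.getD t true then stepA else stepB) _ = _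
    rw [hw t (by omega), ih (fun i hi => hw i (by omega))]
    rfl

lemma mstate_eq_runD (l : ℕ) (w : List Bool) (t : ℕ) :
    mstate l w t = runD w t (List.replicate (l-1) MSym.dot ++ [MSym.mark]) := by
  induction t with
  | zero => rfl
  | succ t ih =>
    show (if w.getD t true then stepA else stepB) _ = (if w.getD t true then stepA else stepB) _
    rw [ih]

lemma goodD {l : ℕ} {w : List Bool} (hg : GoodWord l w) :
    ∀ i, w.getD i true = true → w.getD (i + (l-1)) true = true := by
  intro i hi
  by_cases h : i + (l-1) < w.length
  · exact hg i h hi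
  · exact List.getD_eq_default _ _ (by omega)

lemma good_drop {l : ℕ} {w : List Bool} (hg : GoodWord l w) (a : ℕ) : GoodWord l (w.drop a) := by
  intro i hi hv
  rw [getD_drop'] at hv ⊢
  rw [List.length_drop] at hi
  have h2 := goodD hg (a+i) hv
  rwa [show a + (i + (l-1)) = a + i + (l-1) by omega]

lemma mg_of_true {b : Bool} (h : b = true) : mg b = MSym.circ := by rw [h]; rfl
lemma mg_of_false {b : Bool} (h : b = false) : mg b = MSym.dot := by rw [h]; rfl

lemma mg_ne_mark (c : Bool) : mg c ≠ MSym.mark := by cases c <;> simp [mg]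
lemma mg_eq_circ {c : Bool} (h : mg c = MSym.circ) : c = true := by
  cases c
  · simp [mg] at h
  · rfl

end Blocks
section Uniq

lemma block_ne_nil {l s : ℕ} (hl : 2 ≤ l) {b : List Bool} (hb : IsBlock l s b) : b ≠ [] := by
  intro h
  have h2 := hb.2.1
  rw [h] at h2
  simp at h2
  omega

lemma blocks_head_eq {l : ℕ} (hl : 2 ≤ l) {s1 s2 : ℕ} {b1 b2 f1 f2 : List Bool}
    (h1 : IsBlock l s1 b1) (h2 : IsBlock l s2 b2) (he : b1 ++ f1 = b2 ++ f2) :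
    b1 = b2 ∧ f1 = f2 := by
  have key : ∀ s1 s2 (b1 b2 f1 f2 : List Bool), IsBlock l s1 b1 → IsBlock l s2 b2 →
      b1 ++ f1 = b2 ++ f2 → s1 < s2 → False := by
    intro s1 s2 b1 b2 f1 f2 h1 h2 he hs
    obtain ⟨hs1, hl1, _, hB1, _, _, _⟩ := h1
    obtain ⟨hs2, hl2, _, _, _, hA2, _⟩ := h2
    have e1 : (b1 ++ f1).getD (s1+1) true = false := by
      rw [getD_append_left' _ _ _ _ (by omega)]; exact hB1
    have e2 : (b2 ++ f2).getD (s1+1) true = true := by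
      rw [getD_append_left' _ _ _ _ (by omega)]
      exact hA2 (s1+1) (by omega) (by omega)
    rw [he, e2] at e1
    exact Bool.noConfusion e1
  have hss : s1 = s2 := by
    rcases lt_trichotomy s1 s2 with h | h | h
    · exact absurd (key s1 s2 b1 b2 f1 f2 h1 h2 he h) not_false
    · exact h
    · exact absurd (key s2 s1 b2 b1 f2 f1 h2 h1 he.symm h) not_false
  exact List.append_inj he (by rw [h1.2.1, h2.2.1, hss])

lemma blocks_unique {l : ℕ} (hl : 2 ≤ l) :
    ∀ bs1 bs2 : List (List Bool), (∀ blk ∈ bs1, ∃ s, IsBlock l s blk) →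
      (∀ blk ∈ bs2, ∃ s, IsBlock l s blk) → bs1.flatten = bs2.flatten → bs1 = bs2 := by
  intro bs1
  induction bs1 with
  | nil =>
    intro bs2 _ h2 he
    cases bs2 with
    | nil => rfl
    | cons b t =>
      obtain ⟨s, hb⟩ := h2 b (by simp)
      exfalso
      apply block_ne_nil hl hb
      simp only [List.flatten_nil, List.flatten_cons] at he
      exact (List.append_eq_nil_iff.mp he.symm).1
  | cons b1 t1 ih =>
    intro bs2 h1 h2 he
    cases bs2 with
    | nil =>
      obtain ⟨s, hb⟩ := h1 b1 (by simp)
      exfalso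
      apply block_ne_nil hl hb
      simp only [List.flatten_nil, List.flatten_cons] at he
      exact (List.append_eq_nil_iff.mp he).1
    | cons b2 t2 =>
      obtain ⟨s1, hb1⟩ := h1 b1 (by simp)
      obtain ⟨s2, hb2⟩ := h2 b2 (by simp)
      simp only [List.flatten_cons] at he
      obtain ⟨hb, hf⟩ := blocks_head_eq hl hb1 hb2 he
      rw [hb, ih t2 (fun blk h => h1 blk (by simp [h])) (fun blk h => h2 blk (by simp [h])) hf]

end Uniq
section Main

lemma exists_blocks (L : ℕ) :
    ∀ n (w : List Bool) (D : List MSym), w.length ≤ n →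
      D.length = L →
      (∀ j, D.getD j MSym.dot = MSym.circ → w.getD (j+1) true = true) →
      (MSym.mark ∉ D) →
      w.getD 0 true = false →
      GoodWord (L+2) w →
      (runD w w.length (MSym.mark :: MSym.dot :: D)).getD 0 MSym.circ = MSym.mark →
      (runD w w.length (MSym.mark :: MSym.dot :: D)).getD 1 MSym.circ = MSym.dot →
      ∃ bs : List (List Bool), bs ≠ [] ∧ (∀ blk ∈ bs, ∃ s, IsBlock (L+2) s blk) ∧
        bs.flatten = w := by
  intro n
  induction n with
  | zero =>
    intro w D hn _ _ _ h0 _ _ _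
    have hw : w = [] := List.length_eq_zero_iff.mp (by omega)
    subst hw
    simp [List.getD] at h0
  | succ n ih =>
    intro w D hn hD hcompat hmark h0 hgood hfin0 hfin1
    set V : List MSym := MSym.mark :: MSym.dot :: D with hV
    have hwne : w ≠ [] := by intro h; subst h; simp [List.getD] at h0
    have hw1 : 1 ≤ w.length := List.length_pos_iff.mpr hwne
    have gd : ∀ i, w.getD i true = true → w.getD (i + (L+1)) true = true := by
      intro i hi
      by_cases hr : i + (L+1) < w.length
      · exact hgood i (by omega) hi
      · exact List.getD_eq_default _ _ (by omega)
    -- Phase 1 invariant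
    have inv1 : ∀ t, t ≤ L → runD w (t+1) V =
        MSym.dot :: (D.drop t ++ [MSym.mark] ++
          (List.range t).map (fun i => mg (w.getD (i+1) true))) := by
      intro t
      induction t with
      | zero =>
        intro _
        show (if w.getD 0 true then stepA else stepB) V = _
        rw [h0]
        simp [stepB_cons, hV]
      | succ t iht =>
        intro ht
        have hprev := iht (by omega)
        have hdrop : D.drop t = D.getD t MSym.dot :: D.drop (t+1) := by
          rw [List.getD_eq_getElem _ _ (by omega)]
          exact List.drop_eq_getElem_cons (by omega)
        show (if w.getD (t+1) true then stepA else stepB) (runD w (t+1) V) = _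
        rw [hprev, hdrop]
        cases hc : w.getD (t+1) true with
        | true =>
          simp only [if_true, List.cons_append, List.append_assoc]
          rw [stepA_dot]
          simp only [List.range_succ, List.map_append, List.map_cons, List.map_nil,
            mg_of_true hc, List.append_assoc, List.cons_append, List.nil_append,
            List.append_nil]
        | false =>
          have hdt : D.getD t MSym.dot = MSym.dot := by
            have hmem : D.getD t MSym.dot ∈ D := by
              rw [List.getD_eq_getElem _ _ (by omega)]
              exact List.getElem_mem _
            cases hcase : D.getD t MSym.dot with
            | dot => rfl
            | circ =>
              have := hcompat t hcase
              rw [hc] at this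
              exact Bool.noConfusion this
            | mark => rw [hcase] at hmem; exact absurd hmem hmark
          rw [hdt]
          simp only [Bool.false_eq_true, if_false, List.cons_append, List.append_assoc]
          rw [stepB_cons]
          simp only [List.range_succ, List.map_append, List.map_cons, List.map_nil,
            mg_of_false hc, List.append_assoc, List.cons_append, List.nil_append,
            List.append_nil]
    -- |w| ≥ L+2
    have hwlen : L + 2 ≤ w.length := by
      by_contra hcon
      push_neg at hcon
      obtain ⟨t, ht⟩ : ∃ t, w.length = t + 1 := ⟨w.length - 1, by omega⟩
      have hi := inv1 t (by omega)
      rw [ht, hi] at hfin0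
      simp [List.getD] at hfin0
    -- state at time L+1
    have hdropL : D.drop L = [] := by rw [← hD]; exact List.drop_length
    have sL1 : runD w (L+1) V = MSym.dot :: MSym.mark ::
        (List.range L).map (fun i => mg (w.getD (i+1) true)) := by
      rw [inv1 L le_rfl, hdropL]
      simp
    have hGmark : MSym.mark ∉ (List.range L).map (fun i => mg (w.getD (i+1) true)) := by
      simp only [List.mem_map]
      rintro ⟨i, _, hi⟩
      exact mg_ne_mark _ hi
    -- w[L+1] = false
    have hBl : w.getD (L+1) true = false := by
      cases hc : w.getD (L+1) true with
      | false => rfl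
      | true =>
        exfalso
        have hstep : runD w (L+2) V = MSym.dot ::
            (((List.range L).map (fun i => mg (w.getD (i+1) true))) ++ [MSym.circ]) := by
          show (if w.getD (L+1) true then stepA else stepB) (runD w (L+1) V) = _
          rw [hc, if_pos rfl, sL1, stepA_dot]
        have hnm : MSym.mark ∉ runD w w.length V := by
          rw [show w.length = (L+2) + (w.length - (L+2)) from by omega, runD_add, hstep]
          apply mark_not_mem_runD
          intro hmem
          rcases List.mem_cons.mp hmem with h | h
          · exact MSym.noConfusion h
          rcases List.mem_append.mp h with h | h
          · exact hGmark h
          · simp at h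
        exact hnm (mark_mem_of_getD0 hfin0)
    -- the parameter s
    have hex : ∃ i, w.getD (i+1) true = false := ⟨L, hBl⟩
    set s := Nat.find hex with hs_def
    have hsspec : w.getD (s+1) true = false := Nat.find_spec hex
    have hsle : s ≤ L := Nat.find_min' hex hBl
    have hsA : ∀ i, i < s → w.getD (i+1) true = true := by
      intro i hi
      have hm := Nat.find_min hex hi
      cases h : w.getD (i+1) true
      · exact absurd h hm
      · rfl
    have htopA : ∀ u, u < s → w.getD (L+2+u) true = true := by
      intro u hu
      have := gd (u+1) (hsA u hu)
      rwa [show u+1+(L+1) = L+2+u by omega] at this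
    -- Phase 2 invariant
    have inv2 : ∀ u, u ≤ s → runD w (L+2+u) V =
        MSym.mark :: (((List.range (L+1-u)).map fun i => mg (w.getD (i+1+u) true)) ++
          List.replicate u MSym.circ) := by
      intro u
      induction u with
      | zero =>
        intro _
        show (if w.getD (L+1) true then stepA else stepB) (runD w (L+1) V) = _
        rw [hBl, if_neg (by simp), sL1, stepB_cons]
        rw [show L+1-0 = L+1 from rfl, List.range_succ]
        simp only [List.map_append, List.map_cons, List.map_nil, mg_of_false hBl,
          List.append_assoc, List.cons_append, List.nil_append, List.append_nil,
          List.replicate_zero]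
      | succ u ihu =>
        intro hu
        have hprev := ihu (by omega)
        have hA := htopA u (by omega)
        show (if w.getD (L+2+u) true then stepA else stepB) (runD w (L+2+u) V) = _
        rw [hA, if_pos rfl, hprev]
        rw [show L+1-u = (L-u)+1 from by omega, map_range_succ_peel]
        rw [show (0:ℕ)+1+u = u+1 from by omega, hsA u (by omega)]
        show stepA (MSym.mark :: MSym.circ :: _) = _
        rw [stepA_mark_circ]
        rw [show L+1-(u+1) = L-u from by omega]
        rw [map_range_congr (fun i => mg (w.getD (i+1+1+u) true))
          (fun i => mg (w.getD (i+1+(u+1)) true)) (L-u)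
          (fun i _ => congrArg (fun x => mg (w.getD x true))
            (by omega : i+1+1+u = i+1+(u+1)))]
        simp [List.replicate_succ', List.append_assoc, mg]
    -- |w| ≥ L+2+s
    have hwls : L+2+s ≤ w.length := by
      by_contra hcon
      push_neg at hcon
      obtain ⟨u, hu⟩ : ∃ u, w.length = L+2+u := ⟨w.length - (L+2), by omega⟩
      have hus : u < s := by omega
      have hi2 := inv2 u (by omega)
      rw [hu, hi2] at hfin1
      rw [show L+1-u = (L-u)+1 from by omega, map_range_succ_peel] at hfin1
      rw [show (0:ℕ)+1+u = u+1 from by omega, hsA u hus] at hfin1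
      simp [List.getD, mg] at hfin1
    -- state at time L+2+s
    set D' : List MSym := (((List.range (L-s)).map fun i => mg (w.getD (i+2+s) true)) ++
        List.replicate s MSym.circ) with hD'
    have sLS : runD w (L+2+s) V = MSym.mark :: MSym.dot :: D' := by
      rw [inv2 s le_rfl]
      rw [show L+1-s = (L-s)+1 from by omega, map_range_succ_peel]
      rw [show (0:ℕ)+1+s = s+1 from by omega, hsspec]
      rw [map_range_congr (fun i => mg (w.getD (i+1+1+s) true))
        (fun i => mg (w.getD (i+2+s) true)) (L-s)
        (fun i _ => congrArg (fun x => mg (w.getD x true))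
          (by omega : i+1+1+s = i+2+s))]
      simp [mg, hD']
    have hD'len : D'.length = L := by
      simp [hD']
      omega
    have hD'mark : MSym.mark ∉ D' := by
      simp only [hD', List.mem_append, List.mem_map, List.mem_replicate]
      rintro (⟨i, _, hi⟩ | ⟨_, h⟩)
      · exact mg_ne_mark _ hi
      · exact MSym.noConfusion h
    -- block conditions helper
    have hblock : IsBlock (L+2) s (w.take (L+2+s)) ∨ True := Or.inr trivial
    rcases eq_or_lt_of_le hwls with heq | hgt
    · -- single block
      refine ⟨[w], by simp, ?_, by simp⟩
      intro blk hblk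
      rw [List.mem_singleton] at hblk
      subst hblk
      refine ⟨s, ?_, by omega, h0, hsspec, hBl, ?_, ?_⟩
      · simpa using hsle
      · intro i h1 h2
        obtain ⟨j, rfl⟩ : ∃ j, i = j + 1 := ⟨i - 1, by omega⟩
        exact hsA j (by omega)
      · intro i h1 h2
        obtain ⟨u, rfl⟩ : ∃ u, i = L+2+u := ⟨i - (L+2), by omega⟩
        exact htopA u (by omega)
    · -- recurse
      have hnext : w.getD (L+2+s) true = false := by
        cases hc : w.getD (L+2+s) true with
        | false => rfl
        | true =>
          exfalso
          have hstep : runD w (L+2+s+1) V = MSym.dot :: (D' ++ [MSym.circ]) := by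
            show (if w.getD (L+2+s) true then stepA else stepB) (runD w (L+2+s) V) = _
            rw [hc, if_pos rfl, sLS, stepA_mark_dot]
          have hnm : MSym.mark ∉ runD w w.length V := by
            rw [show w.length = (L+2+s+1) + (w.length - (L+2+s+1)) from by omega,
              runD_add, hstep]
            apply mark_not_mem_runD
            intro hmem
            rcases List.mem_cons.mp hmem with h | h
            · exact MSym.noConfusion h
            rcases List.mem_append.mp h with h | h
            · exact hD'mark h
            · simp at h
          exact hnm (mark_mem_of_getD0 hfin0)
      set w' := w.drop (L+2+s) with hw'
      have hw'len : w'.length = w.length - (L+2+s) := List.length_drop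
      have hmid : ∀ u, u < s → w.getD (L+2+u) true = true := htopA
      have hcompat' : ∀ j, D'.getD j MSym.dot = MSym.circ → w'.getD (j+1) true = true := by
        intro j hj
        have hjL : j < L := by
          by_contra hjc
          push_neg at hjc
          rw [List.getD_eq_default _ _ (by omega)] at hj
          exact MSym.noConfusion hj
        have hsrc : w.getD (s+j+2) true = true := by
          by_cases hcase : j < L - s
          · rw [hD'] at hj
            rw [getD_append_left' _ _ _ _ (by simpa using hcase),
              getD_map_range _ _ _ _ hcase] at hj
            have := mg_eq_circ hj
            rwa [show j+2+s = s+j+2 from by omega] at this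
          · have := htopA (s+j-L) (by omega)
            rwa [show L+2+(s+j-L) = s+j+2 from by omega] at this
        have := gd (s+j+2) hsrc
        rw [hw', getD_drop']
        rwa [show s+j+2+(L+1) = L+2+s+(j+1) from by omega] at this
      have hfin0' : (runD w' w'.length (MSym.mark :: MSym.dot :: D')).getD 0 MSym.circ
          = MSym.mark := by
        rw [← sLS, ← runD_add, show L+2+s + w'.length = w.length from by omega]
        exact hfin0
      have hfin1' : (runD w' w'.length (MSym.mark :: MSym.dot :: D')).getD 1 MSym.circ
          = MSym.dot := by
        rw [← sLS, ← runD_add, show L+2+s + w'.length = w.length from by omega]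
        exact hfin1
      obtain ⟨bs', hbs'ne, hbs'blk, hbs'flat⟩ := ih w' D' (by omega) hD'len hcompat' hD'mark
        (by rw [hw', getD_drop']; simpa using hnext) (good_drop hgood _) hfin0' hfin1'
      refine ⟨w.take (L+2+s) :: bs', by simp, ?_, ?_⟩
      · intro blk hblk
        rcases List.mem_cons.mp hblk with hblk | hblk
        · subst hblk
          have htk : ∀ i, i < L+2+s → (w.take (L+2+s)).getD i true = w.getD i true :=
            fun i hi => getD_take' _ _ _ _ hi
          refine ⟨s, ?_, ?_, ?_, ?_, ?_, ?_, ?_⟩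
          · simpa using hsle
          · rw [List.length_take]; omega
          · rw [htk 0 (by omega)]; exact h0
          · rw [htk (s+1) (by omega)]; exact hsspec
          · rw [show L+2-1 = L+1 from rfl, htk (L+1) (by omega)]; exact hBl
          · intro i h1 h2
            rw [htk i (by omega)]
            obtain ⟨j, rfl⟩ : ∃ j, i = j + 1 := ⟨i - 1, by omega⟩
            exact hsA j (by omega)
          · intro i h1 h2
            rw [htk i (by omega)]
            obtain ⟨u, rfl⟩ : ∃ u, i = L+2+u := ⟨i - (L+2), by omega⟩
            exact htopA u (by omega)
        · exact hbs'blk blk hblk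
      · simp only [List.flatten_cons, hbs'flat, hw']
        exact List.take_append_drop _ _

end Main

/-- If `(NAK, NBK)` is a cancellation pair, then `BN` decomposes uniquely as a
product of cancellation blocks `BN = 𝔹_{s_1} ⋯ 𝔹_{s_p}` with `p ≥ 1` and
`0 ≤ s_1, …, s_p ≤ l-2`. -/
theorem stmt18 (l : ℕ) (hl : 2 ≤ l) (N K : List Bool) (h : CancelPair l N K) :
    ∃! bs : List (List Bool),
      0 < bs.length ∧ (∀ blk ∈ bs, ∃ s, IsBlock l s blk) ∧ bs.flatten = false :: N := by
  obtain ⟨L, rfl⟩ : ∃ L, l = L + 2 := ⟨l - 2, by omega⟩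
  obtain ⟨hgoodNK, hCS, _⟩ := h
  obtain ⟨hc0, hc1⟩ : (mstate (L+2) (N ++ true :: K) N.length).getD 0 MSym.circ = MSym.mark ∧
      (mstate (L+2) (N ++ true :: K) N.length).getD 1 MSym.circ = MSym.dot := hCS
  have hm : mstate (L+2) (N ++ true :: K) N.length = mstate (L+2) N N.length := by
    rw [mstate_eq_runD, mstate_eq_runD]
    refine runD_congr _ (fun i hi => ?_) _
    exact getD_append_left' _ _ _ _ hi
  rw [hm] at hc0 hc1
  -- goodness of false :: N
  have hgood : GoodWord (L+2) (false :: N) := by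
    intro i hi hv
    cases i with
    | zero => exact absurd hv (by simp [List.getD])
    | succ j =>
      simp only [List.length_cons] at hi
      have hj : j + (L+1) < N.length := by
        have : (L+2) - 1 = L+1 := rfl
        omega
      have hv' : N.getD j true = true := hv
      have := hgoodNK j (by simp [List.length_append]; omega)
        (by rwa [getD_append_left' _ _ _ _ (by omega)])
      rw [getD_append_left' _ _ _ _ (by omega)] at this
      rw [show j+1+(L+2-1) = (j+(L+2-1))+1 from by omega, List.getD_cons_succ]
      exact this
  -- relating runD on false :: N to mstate of N
  have hrun : runD (false :: N) (false :: N).length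
      (MSym.mark :: MSym.dot :: List.replicate L MSym.dot) = mstate (L+2) N N.length := by
    have h1 : runD (false :: N) 1 (MSym.mark :: MSym.dot :: List.replicate L MSym.dot) =
        List.replicate (L+1) MSym.dot ++ [MSym.mark] := by
      show stepB (MSym.mark :: MSym.dot :: List.replicate L MSym.dot) = _
      rw [stepB_cons, List.replicate_succ]
    rw [show (false :: N).length = 1 + N.length from by simp [Nat.add_comm], runD_add, h1]
    rw [mstate_eq_runD]
    rfl
  obtain ⟨bs, hne, hblk, hflat⟩ := exists_blocks L (false :: N).length (false :: N)
    (List.replicate L MSym.dot) le_rfl (by simp)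
    (by
      intro j hj
      rw [getD_all _ (fun x hx => (List.eq_of_mem_replicate hx)) j] at hj
      exact absurd hj (by simp))
    (by
      intro hmem
      exact absurd (List.eq_of_mem_replicate hmem) (by simp))
    rfl hgood (by rw [hrun]; exact hc0) (by rw [hrun]; exact hc1)
  refine ⟨bs, ⟨List.length_pos_iff.mpr hne, hblk, hflat⟩, ?_⟩
  rintro y ⟨hy1, hy2, hy3⟩
  exact blocks_unique (by omega) y bs hy2 hblk (by rw [hy3, hflat])
end
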